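/- Let A and B be symmetric positive semidefinite d×d real matrices with smallest eigenvalue of B at least C > 0 and smallest eigenvalue of A at least C > 0. If v is a unit eigenvector of A^{1/2} − B^{1/2} with eigenvalue λ, then |λ| · vᵀ(A^{1/2} + B^{1/2})v = |vᵀ(A − B)v|, and consequently |λ| ≤ ‖A − B‖₂ / (2√C), where ‖·‖₂ denotes the operator (spectral) norm. -/

import Mathlib

open Matrix
open scoped Matrix.Norms.L2Operator

open scoped ComplexOrder in
noncomputable def Matrix.PosSemidef.sqrt {n : Type*} [Fintype n] [DecidableEq n]
    {𝕜 : Type*} [RCLike 𝕜] {A : Matrix n n 𝕜} (hA : A.PosSemidef) : Matrix n n 𝕜 :=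
  hA.1.eigenvectorUnitary.1 * diagonal ((↑) ∘ (√·) ∘ hA.1.eigenvalues) *
    (star hA.1.eigenvectorUnitary : Matrix n n 𝕜)

lemma Matrix.PosSemidef.posSemidef_sqrt {n : Type*} [Fintype n] [DecidableEq n]
    {A : Matrix n n ℝ} (hA : A.PosSemidef) : hA.sqrt.PosSemidef :=
  (Matrix.posSemidef_diagonal_iff.mpr fun i => by
    simp [Real.sqrt_nonneg]).mul_mul_conjTranspose_same hA.1.eigenvectorUnitary.1

lemma Matrix.PosSemidef.sqrt_mul_self {n : Type*} [Fintype n] [DecidableEq n]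
    {A : Matrix n n ℝ} (hA : A.PosSemidef) : hA.sqrt * hA.sqrt = A := by
  set U : Matrix n n ℝ := hA.1.eigenvectorUnitary.1 with hU
  have hUU : star U * U = 1 := Unitary.star_mul_self_of_mem hA.1.eigenvectorUnitary.2
  conv_rhs => rw [hA.1.spectral_theorem, Unitary.conjStarAlgAut_apply]
  simp only [Matrix.PosSemidef.sqrt]
  rw [← hU]
  calc U * diagonal ((↑) ∘ (√·) ∘ hA.1.eigenvalues) * star U *
        (U * diagonal ((↑) ∘ (√·) ∘ hA.1.eigenvalues) * star U)
      = U * diagonal ((↑) ∘ (√·) ∘ hA.1.eigenvalues) * (star U * U) *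
        diagonal ((↑) ∘ (√·) ∘ hA.1.eigenvalues) * star U := by simp only [mul_assoc]
    _ = _ := by
      rw [hUU, mul_one, mul_assoc U, diagonal_mul_diagonal]
      congr 3
      funext i
      simp [Real.mul_self_sqrt (hA.eigenvalues_nonneg i)]

/-- Quadratic form lower bound for the psd square root when eigenvalues are bounded below. -/
lemma sqrt_quad_lower {n : Type*} [Fintype n] [DecidableEq n] {A : Matrix n n ℝ}
    (hA : A.PosSemidef) (c : ℝ) (h : ∀ i, c ≤ hA.1.eigenvalues i) (v : n → ℝ) :
    Real.sqrt c * (v ⬝ᵥ v) ≤ v ⬝ᵥ hA.sqrt *ᵥ v := by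
  set U : Matrix n n ℝ := hA.1.eigenvectorUnitary.1 with hU
  have hUU : U * star U = 1 := Matrix.mem_unitaryGroup_iff.mp hA.1.eigenvectorUnitary.2
  have key : (hA.sqrt - Real.sqrt c • (1 : Matrix n n ℝ)).PosSemidef := by
    have h1 : hA.sqrt - Real.sqrt c • (1 : Matrix n n ℝ) =
        U * diagonal (fun i => Real.sqrt (hA.1.eigenvalues i) - Real.sqrt c) * star U := by
      have h2 : Real.sqrt c • (1 : Matrix n n ℝ) =
          U * (Real.sqrt c • (1 : Matrix n n ℝ)) * star U := by
        rw [mul_smul_comm, smul_mul_assoc, mul_one, hUU]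
      have h3 : (RCLike.ofReal ∘ Real.sqrt ∘ hA.1.eigenvalues : n → ℝ)
          = fun i => Real.sqrt (hA.1.eigenvalues i) := by
        funext i; simp [RCLike.ofReal]
      rw [Matrix.PosSemidef.sqrt, h3, h2, ← sub_mul, ← mul_sub,
        Matrix.smul_one_eq_diagonal, diagonal_sub]
    rw [h1]
    exact (Matrix.posSemidef_diagonal_iff.mpr fun i =>
      sub_nonneg.mpr (Real.sqrt_le_sqrt (h i))).mul_mul_conjTranspose_same U
  have := key.dotProduct_mulVec_nonneg v
  rw [star_trivial, sub_mulVec, dotProduct_sub, smul_mulVec, one_mulVec,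
    dotProduct_smul, smul_eq_mul, sub_nonneg] at this
  exact this

lemma dot_self_eq_normsq {d : ℕ} (v : EuclideanSpace ℝ (Fin d)) :
    (v : Fin d → ℝ) ⬝ᵥ (v : Fin d → ℝ) = ‖v‖ ^ 2 := by
  rw [EuclideanSpace.norm_eq, Real.sq_sqrt (Finset.sum_nonneg fun i _ => sq_nonneg _)]
  simp [dotProduct, sq]

lemma abs_dot_mulVec_le {d : ℕ} (M : Matrix (Fin d) (Fin d) ℝ)
    (v : EuclideanSpace ℝ (Fin d)) :
    |(v : Fin d → ℝ) ⬝ᵥ M *ᵥ (v : Fin d → ℝ)| ≤ ‖M‖ * ‖v‖ * ‖v‖ := by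
  set w : EuclideanSpace ℝ (Fin d) := (EuclideanSpace.equiv (Fin d) ℝ).symm (M *ᵥ v)
  have h1 : (v : Fin d → ℝ) ⬝ᵥ M *ᵥ (v : Fin d → ℝ) = inner ℝ v w := by
    simp [PiLp.inner_apply, dotProduct, w, mul_comm]
  rw [h1]
  calc |inner ℝ v w| ≤ ‖v‖ * ‖w‖ := abs_real_inner_le_norm v w
    _ ≤ ‖v‖ * (‖M‖ * ‖v‖) := by
        gcongr
        exact M.l2_opNorm_mulVec v
    _ = ‖M‖ * ‖v‖ * ‖v‖ := by ring

/-- If `v` is a unit eigenvector of `A^{1/2} - B^{1/2}` with eigenvalue `λ`, then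
`|λ| · vᵀ(A^{1/2}+B^{1/2})v = |vᵀ(A-B)v|` and `|λ| ≤ ‖A - B‖₂ / (2√C)`. -/
theorem stmt_0 (d : ℕ) (A B : Matrix (Fin d) (Fin d) ℝ)
    (hA : A.PosSemidef) (hB : B.PosSemidef) (C : ℝ) (hC : 0 < C)
    (hAev : ∀ i, C ≤ hA.1.eigenvalues i) (hBev : ∀ i, C ≤ hB.1.eigenvalues i)
    (v : EuclideanSpace ℝ (Fin d)) (hv : ‖v‖ = 1) (lam : ℝ)
    (heig : (hA.sqrt - hB.sqrt).mulVec v = lam • (v : Fin d → ℝ)) :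
    |lam| * ((v : Fin d → ℝ) ⬝ᵥ (hA.sqrt + hB.sqrt).mulVec v)
      = |(v : Fin d → ℝ) ⬝ᵥ (A - B).mulVec v| ∧
    |lam| ≤ ‖A - B‖ / (2 * Real.sqrt C) := by
  set S := hA.sqrt with hS
  set T := hB.sqrt with hT
  have hvv : (v : Fin d → ℝ) ⬝ᵥ (v : Fin d → ℝ) = 1 := by
    rw [dot_self_eq_normsq, hv, one_pow]
  -- key identity
  have hdecomp : A - B = S * (S - T) + (S - T) * T := by
    rw [mul_sub, sub_mul, ← hA.sqrt_mul_self, ← hB.sqrt_mul_self]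
    abel
  have hSsym : Sᵀ = S := hA.posSemidef_sqrt.1
  have hTsym : Tᵀ = T := hB.posSemidef_sqrt.1
  have hkey : (v : Fin d → ℝ) ⬝ᵥ (A - B) *ᵥ (v : Fin d → ℝ)
      = lam * ((v : Fin d → ℝ) ⬝ᵥ (S + T) *ᵥ (v : Fin d → ℝ)) := by
    rw [hdecomp, add_mulVec, dotProduct_add]
    have h1 : (v : Fin d → ℝ) ⬝ᵥ (S * (S - T)) *ᵥ (v : Fin d → ℝ)
        = lam * ((v : Fin d → ℝ) ⬝ᵥ S *ᵥ (v : Fin d → ℝ)) := by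
      rw [← mulVec_mulVec, heig, mulVec_smul, dotProduct_smul, smul_eq_mul]
    have h2 : (v : Fin d → ℝ) ⬝ᵥ ((S - T) * T) *ᵥ (v : Fin d → ℝ)
        = lam * ((v : Fin d → ℝ) ⬝ᵥ T *ᵥ (v : Fin d → ℝ)) := by
      rw [← mulVec_mulVec, dotProduct_mulVec, ← mulVec_transpose,
        transpose_sub, hSsym, hTsym, heig, smul_dotProduct, smul_eq_mul,
        dotProduct_mulVec, ← mulVec_transpose, hTsym]
    rw [h1, h2, add_mulVec, dotProduct_add, mul_add]
  have hSlow : Real.sqrt C ≤ (v : Fin d → ℝ) ⬝ᵥ S *ᵥ (v : Fin d → ℝ) := by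
    have := sqrt_quad_lower hA C hAev (v : Fin d → ℝ)
    rwa [hvv, mul_one] at this
  have hTlow : Real.sqrt C ≤ (v : Fin d → ℝ) ⬝ᵥ T *ᵥ (v : Fin d → ℝ) := by
    have := sqrt_quad_lower hB C hBev (v : Fin d → ℝ)
    rwa [hvv, mul_one] at this
  have hsqrtC : 0 < Real.sqrt C := Real.sqrt_pos.mpr hC
  have hSTpos : 2 * Real.sqrt C ≤ (v : Fin d → ℝ) ⬝ᵥ (S + T) *ᵥ (v : Fin d → ℝ) := by
    rw [add_mulVec, dotProduct_add, two_mul]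
    exact add_le_add hSlow hTlow
  have hSTnonneg : 0 ≤ (v : Fin d → ℝ) ⬝ᵥ (S + T) *ᵥ (v : Fin d → ℝ) :=
    le_trans (by positivity) hSTpos
  have heq : |lam| * ((v : Fin d → ℝ) ⬝ᵥ (S + T) *ᵥ (v : Fin d → ℝ))
      = |(v : Fin d → ℝ) ⬝ᵥ (A - B) *ᵥ (v : Fin d → ℝ)| := by
    rw [hkey, abs_mul, abs_of_nonneg hSTnonneg]
  refine ⟨heq, ?_⟩
  have hbound : |(v : Fin d → ℝ) ⬝ᵥ (A - B) *ᵥ (v : Fin d → ℝ)| ≤ ‖A - B‖ := by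
    have := abs_dot_mulVec_le (A - B) v
    rwa [hv, mul_one, mul_one] at this
  rw [le_div_iff₀ (by positivity)]
  calc |lam| * (2 * Real.sqrt C) ≤ |lam| * ((v : Fin d → ℝ) ⬝ᵥ (S + T) *ᵥ (v : Fin d → ℝ)) := by
        gcongr
    _ = |(v : Fin d → ℝ) ⬝ᵥ (A - B) *ᵥ (v : Fin d → ℝ)| := heq
    _ ≤ ‖A - B‖ := hbound
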